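/- Classical Bayesian Inference Theorem, backward direction: Let X, Y be finite types and τ a state on X × Y with M₁(τ) everywhere nonzero, and let c := extr(τ). For a predicate q on Y with τ ⊨ (1 ⊗ q) ≠ 0, the first marginal of τ conditioned by 1 ⊗ q equals the first marginal conditioned by the backward-transformed predicate: M₁(τ|_{1 ⊗ q}) = M₁(τ)|_{c ≪ q}. -/

import Mathlib

noncomputable section

/-- Validity `ω ⊨ p`. -/
def valid {X : Type*} [Fintype X] (ω p : X → ℝ) : ℝ := ∑ x, ω x * p x

/-- Conditioning `ω|_p`. -/
def stCond {X : Type*} [Fintype X] (ω p : X → ℝ) : X → ℝ :=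
  fun x => ω x * p x / valid ω p

/-- First marginal of a joint state. -/
def M1 {X Y : Type*} [Fintype Y] (τ : X × Y → ℝ) : X → ℝ := fun x => ∑ y, τ (x, y)

/-- Channel extracted from a joint state by disintegration. -/
def extr {X Y : Type*} [Fintype Y] (τ : X × Y → ℝ) : X → Y → ℝ :=
  fun x y => τ (x, y) / M1 τ x

/-- Backward predicate transformation `c ≪ q` along a channel. -/
def bwd {X Y : Type*} [Fintype Y] (c : X → Y → ℝ) (q : Y → ℝ) : X → ℝ :=
  fun x => ∑ y, c x y * q y

/-- Parallel product of predicates `p ⊗ q`. -/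
def tensor {X Y : Type*} (p : X → ℝ) (q : Y → ℝ) : X × Y → ℝ :=
  fun z => p z.1 * q z.2

/-- Classical Bayesian Inference Theorem, backward direction:
`M₁(τ|_{1 ⊗ q}) = M₁(τ)|_{extr(τ) ≪ q}`. -/
theorem classical_bayesian_inference_backward {X Y : Type*} [Fintype X] [Fintype Y]
    (τ : X × Y → ℝ)
    (hτ : ∀ z, 0 ≤ τ z) (hτsum : ∑ z, τ z = 1)
    (hM : ∀ x, M1 τ x ≠ 0)
    (q : Y → ℝ) (hq : ∀ y, 0 ≤ q y ∧ q y ≤ 1)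
    (hv : valid τ (tensor (fun _ => 1) q) ≠ 0) :
    M1 (stCond τ (tensor (fun _ => 1) q)) = stCond (M1 τ) (bwd (extr τ) q) := by
  have key : ∀ x, M1 τ x * bwd (extr τ) q x = ∑ y, τ (x, y) * q y := by
    intro x
    simp only [bwd, extr, Finset.mul_sum]
    refine Finset.sum_congr rfl fun y _ => ?_
    field_simp
    rw [mul_assoc]
    exact mul_div_cancel_left₀ _ (hM x)
  have hvalid : valid (M1 τ) (bwd (extr τ) q) = valid τ (tensor (fun _ => 1) q) := by
    simp only [valid, tensor, one_mul, Fintype.sum_prod_type]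
    exact Finset.sum_congr rfl fun x _ => key x
  funext x
  simp only [M1, stCond, tensor, one_mul, hvalid, ← key x, ← Finset.sum_div]


end
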